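/- Let u be a composition (possibly empty) and v a nonempty composition, and let |u|, |v| denote the sums of their parts. Then P(u ⊕ (3) ⊕ v) = C(|u|+|v|+3, |u|+1) · P(u ⊕ (1)) · P((2) ⊕ v), where C(m, r) is the binomial coefficient (m choose r). -/

import Mathlib

/-- `i` (1-based, with `1 < i < n`) is a peak of the permutation `σ` of `{1,…,n}`
(represented as a permutation of `Fin n`, position `j` (1-based) being index `j-1`). -/
def IsPeak {n : ℕ} (σ : Equiv.Perm (Fin n)) (i : ℕ) : Prop :=
  ∃ (h₂ : 2 ≤ i) (h₃ : i < n),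
    σ ⟨i - 2, by omega⟩ < σ ⟨i - 1, by omega⟩ ∧ σ ⟨i, h₃⟩ < σ ⟨i - 1, by omega⟩

open Classical in
/-- The peak set of a permutation of `{1,…,n}` (as a set of 1-based positions). -/
noncomputable def peakSet {n : ℕ} (σ : Equiv.Perm (Fin n)) : Finset ℕ :=
  (Finset.range n).filter (fun i => IsPeak σ i)

/-- `P(S;n)`: the number of permutations of `{1,…,n}` with peak set `S`. -/
noncomputable def numPeakSet (n : ℕ) (S : Finset ℕ) : ℕ :=
  Nat.card {σ : Equiv.Perm (Fin n) // peakSet σ = S}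

/-- `c` is a composition of `n`: a list of positive integers summing to `n`. -/
def IsComposition (n : ℕ) (c : List ℕ) : Prop :=
  (∀ x ∈ c, 0 < x) ∧ c.sum = n

/-- The set `S(c)` of proper partial sums of the composition `c`. -/
def compPeaks (c : List ℕ) : Finset ℕ :=
  (Finset.range (c.length - 1)).image (fun i => (c.take (i + 1)).sum)

/-- `P(c)`: the number of permutations of `{1,…,|c|}` whose peak set is `S(c)`. -/
noncomputable def Pcomp (c : List ℕ) : ℕ :=
  numPeakSet c.sum (compPeaks c)

/-- A composition is maximal if `P(b) ≤ P(c)` for every composition `b` of the same size. -/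
def IsMaximal (c : List ℕ) : Prop :=
  ∀ b : List ℕ, IsComposition c.sum b → Pcomp b ≤ Pcomp c

open Finset

lemma isPeak_iff {n : ℕ} (σ : Equiv.Perm (Fin n)) (i : ℕ) :
    IsPeak σ i ↔ 2 ≤ i ∧ i < n ∧
      ∀ a b c : Fin n, (a : ℕ) = i - 2 → (b : ℕ) = i - 1 → (c : ℕ) = i →
        σ a < σ b ∧ σ c < σ b := by
  constructor
  · rintro ⟨h2, h3, p, q⟩
    refine ⟨h2, h3, fun a b c ha hb hc => ?_⟩
    have ea : a = ⟨i - 2, by omega⟩ := Fin.ext ha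
    have eb : b = ⟨i - 1, by omega⟩ := Fin.ext hb
    have ec : c = ⟨i, h3⟩ := Fin.ext hc
    rw [ea, eb, ec]
    exact ⟨p, q⟩
  · rintro ⟨h2, h3, H⟩
    obtain ⟨p, q⟩ := H ⟨i - 2, by omega⟩ ⟨i - 1, by omega⟩ ⟨i, h3⟩ rfl rfl rfl
    exact ⟨h2, h3, p, q⟩

variable {n₁ n₂ : ℕ}

noncomputable def glue (A : Finset (Fin (n₁ + n₂))) (hA : A.card = n₁) (hA' : Aᶜ.card = n₂)
    (σ₁ : Equiv.Perm (Fin n₁)) (σ₂ : Equiv.Perm (Fin n₂)) : Equiv.Perm (Fin (n₁ + n₂)) :=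
  finSumFinEquiv.symm.trans
    ((Equiv.sumCongr (σ₁.trans (A.orderIsoOfFin hA).toEquiv)
        (σ₂.trans ((Aᶜ.orderIsoOfFin hA').toEquiv.trans
          (Equiv.subtypeEquivRight (fun _ => Finset.mem_compl))))).trans
      (Equiv.sumCompl (· ∈ A)))

lemma glue_apply_lt (A : Finset (Fin (n₁ + n₂))) (hA : A.card = n₁) (hA' : Aᶜ.card = n₂)
    (σ₁ : Equiv.Perm (Fin n₁)) (σ₂ : Equiv.Perm (Fin n₂)) (a : Fin (n₁ + n₂)) (a₁ : Fin n₁)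
    (ha : (a : ℕ) = (a₁ : ℕ)) :
    glue A hA hA' σ₁ σ₂ a = (A.orderIsoOfFin hA (σ₁ a₁) : Fin (n₁ + n₂)) := by
  have e : a = Fin.castAdd n₂ a₁ := Fin.ext ha
  rw [glue, e]
  simp only [Equiv.trans_apply, finSumFinEquiv_symm_apply_castAdd]
  simp

lemma glue_apply_ge (A : Finset (Fin (n₁ + n₂))) (hA : A.card = n₁) (hA' : Aᶜ.card = n₂)
    (σ₁ : Equiv.Perm (Fin n₁)) (σ₂ : Equiv.Perm (Fin n₂)) (a : Fin (n₁ + n₂)) (a₂ : Fin n₂)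
    (ha : (a : ℕ) = n₁ + (a₂ : ℕ)) :
    glue A hA hA' σ₁ σ₂ a = (Aᶜ.orderIsoOfFin hA' (σ₂ a₂) : Fin (n₁ + n₂)) := by
  have e : a = Fin.natAdd n₁ a₂ := Fin.ext ha
  rw [glue, e]
  simp only [Equiv.trans_apply, finSumFinEquiv_symm_apply_natAdd]
  simp [Equiv.subtypeEquivRight]
  rfl

lemma glue_lt_low (A : Finset (Fin (n₁ + n₂))) (hA : A.card = n₁) (hA' : Aᶜ.card = n₂)
    (σ₁ : Equiv.Perm (Fin n₁)) (σ₂ : Equiv.Perm (Fin n₂)) (a b : Fin (n₁ + n₂))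
    (a₁ b₁ : Fin n₁) (ha : (a : ℕ) = (a₁ : ℕ)) (hb : (b : ℕ) = (b₁ : ℕ)) :
    glue A hA hA' σ₁ σ₂ a < glue A hA hA' σ₁ σ₂ b ↔ σ₁ a₁ < σ₁ b₁ := by
  rw [glue_apply_lt A hA hA' σ₁ σ₂ a a₁ ha, glue_apply_lt A hA hA' σ₁ σ₂ b b₁ hb]
  simp only [Finset.coe_orderIsoOfFin_apply]
  exact (A.orderEmbOfFin hA).lt_iff_lt

lemma glue_lt_high (A : Finset (Fin (n₁ + n₂))) (hA : A.card = n₁) (hA' : Aᶜ.card = n₂)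
    (σ₁ : Equiv.Perm (Fin n₁)) (σ₂ : Equiv.Perm (Fin n₂)) (a b : Fin (n₁ + n₂))
    (a₂ b₂ : Fin n₂) (ha : (a : ℕ) = n₁ + (a₂ : ℕ)) (hb : (b : ℕ) = n₁ + (b₂ : ℕ)) :
    glue A hA hA' σ₁ σ₂ a < glue A hA hA' σ₁ σ₂ b ↔ σ₂ a₂ < σ₂ b₂ := by
  rw [glue_apply_ge A hA hA' σ₁ σ₂ a a₂ ha, glue_apply_ge A hA hA' σ₁ σ₂ b b₂ hb]
  simp only [Finset.coe_orderIsoOfFin_apply]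
  exact (Aᶜ.orderEmbOfFin hA').lt_iff_lt

lemma isPeak_glue_low (A : Finset (Fin (n₁ + n₂))) (hA : A.card = n₁) (hA' : Aᶜ.card = n₂)
    (σ₁ : Equiv.Perm (Fin n₁)) (σ₂ : Equiv.Perm (Fin n₂)) {i : ℕ} (hi2 : 2 ≤ i) (hi : i < n₁) :
    IsPeak (glue A hA hA' σ₁ σ₂) i ↔ IsPeak σ₁ i := by
  rw [isPeak_iff, isPeak_iff]
  constructor
  · rintro ⟨-, -, H⟩
    refine ⟨hi2, hi, fun a b c ha hb hc => ?_⟩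
    obtain ⟨p, q⟩ := H ⟨i - 2, by omega⟩ ⟨i - 1, by omega⟩ ⟨i, by omega⟩ rfl rfl rfl
    constructor
    · exact (glue_lt_low A hA hA' σ₁ σ₂ _ _ a b (by simp [ha]) (by simp [hb])).mp p
    · exact (glue_lt_low A hA hA' σ₁ σ₂ _ _ c b (by simp [hc]) (by simp [hb])).mp q
  · rintro ⟨-, -, H⟩
    refine ⟨hi2, by omega, fun a b c ha hb hc => ?_⟩
    obtain ⟨p, q⟩ := H ⟨i - 2, by omega⟩ ⟨i - 1, by omega⟩ ⟨i, by omega⟩ rfl rfl rfl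
    constructor
    · exact (glue_lt_low A hA hA' σ₁ σ₂ a b _ _ (by simp [ha]) (by simp [hb])).mpr p
    · exact (glue_lt_low A hA hA' σ₁ σ₂ c b _ _ (by simp [hc]) (by simp [hb])).mpr q

lemma isPeak_glue_high (A : Finset (Fin (n₁ + n₂))) (hA : A.card = n₁) (hA' : Aᶜ.card = n₂)
    (σ₁ : Equiv.Perm (Fin n₁)) (σ₂ : Equiv.Perm (Fin n₂)) {i : ℕ} (hi2 : 2 ≤ i) (hi : i < n₂) :
    IsPeak (glue A hA hA' σ₁ σ₂) (n₁ + i) ↔ IsPeak σ₂ i := by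
  rw [isPeak_iff, isPeak_iff]
  constructor
  · rintro ⟨-, -, H⟩
    refine ⟨hi2, hi, fun a b c ha hb hc => ?_⟩
    obtain ⟨p, q⟩ := H ⟨n₁ + i - 2, by omega⟩ ⟨n₁ + i - 1, by omega⟩ ⟨n₁ + i, by omega⟩
      rfl rfl rfl
    constructor
    · exact (glue_lt_high A hA hA' σ₁ σ₂ _ _ a b (by simp; omega) (by simp; omega)).mp p
    · exact (glue_lt_high A hA hA' σ₁ σ₂ _ _ c b (by simp; omega) (by simp; omega)).mp q
  · rintro ⟨-, -, H⟩
    refine ⟨by omega, by omega, fun a b c ha hb hc => ?_⟩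
    obtain ⟨p, q⟩ := H ⟨i - 2, by omega⟩ ⟨i - 1, by omega⟩ ⟨i, by omega⟩ rfl rfl rfl
    constructor
    · exact (glue_lt_high A hA hA' σ₁ σ₂ a b _ _ (by simp; omega) (by simp; omega)).mpr p
    · exact (glue_lt_high A hA hA' σ₁ σ₂ c b _ _ (by simp; omega) (by simp; omega)).mpr q

lemma isPeak_bounds {n : ℕ} {σ : Equiv.Perm (Fin n)} {i : ℕ} (h : IsPeak σ i) :
    2 ≤ i ∧ i < n := by
  obtain ⟨h2, h3, -⟩ := h
  exact ⟨h2, h3⟩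

lemma mem_peakSet {n : ℕ} (σ : Equiv.Perm (Fin n)) (i : ℕ) :
    i ∈ peakSet σ ↔ IsPeak σ i := by
  classical
  unfold peakSet
  rw [Finset.mem_filter, Finset.mem_range]
  exact ⟨fun h => h.2, fun h => ⟨(isPeak_bounds h).2, h⟩⟩

/-- The junction position `n₁` is not a peak of the glued permutation. -/
lemma not_isPeak_glue_junction₁ (A : Finset (Fin (n₁ + n₂))) (hA : A.card = n₁)
    (hA' : Aᶜ.card = n₂) (σ₁ : Equiv.Perm (Fin n₁)) (σ₂ : Equiv.Perm (Fin n₂))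
    (hm : n₁ = 1 ∨ IsPeak σ₁ (n₁ - 1)) :
    ¬ IsPeak (glue A hA hA' σ₁ σ₂) n₁ := by
  intro hp
  rw [isPeak_iff] at hp
  obtain ⟨h2, h3, H⟩ := hp
  rcases hm with h | h
  · omega
  · rw [isPeak_iff] at h
    obtain ⟨h2', h3', H'⟩ := h
    obtain ⟨p, -⟩ := H ⟨n₁ - 2, by omega⟩ ⟨n₁ - 1, by omega⟩ ⟨n₁, by omega⟩ rfl rfl rfl
    obtain ⟨-, q⟩ := H' ⟨n₁ - 3, by omega⟩ ⟨n₁ - 2, by omega⟩ ⟨n₁ - 1, by omega⟩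
      (by show n₁ - 3 = n₁ - 1 - 2; omega) (by show n₁ - 2 = n₁ - 1 - 1; omega)
      (by show n₁ - 1 = n₁ - 1; rfl)
    have p' := (glue_lt_low A hA hA' σ₁ σ₂ ⟨n₁ - 2, by omega⟩ ⟨n₁ - 1, by omega⟩
      ⟨n₁ - 2, by omega⟩ ⟨n₁ - 1, by omega⟩ rfl rfl).mp p
    exact absurd p' (lt_asymm q)

/-- The junction position `n₁ + 1` is not a peak of the glued permutation. -/
lemma not_isPeak_glue_junction₂ (A : Finset (Fin (n₁ + n₂))) (hA : A.card = n₁)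
    (hA' : Aᶜ.card = n₂) (σ₁ : Equiv.Perm (Fin n₁)) (σ₂ : Equiv.Perm (Fin n₂))
    (h2 : IsPeak σ₂ 2) :
    ¬ IsPeak (glue A hA hA' σ₁ σ₂) (n₁ + 1) := by
  intro hp
  rw [isPeak_iff] at hp h2
  obtain ⟨-, h3, H⟩ := hp
  obtain ⟨-, h3', H'⟩ := h2
  obtain ⟨-, q⟩ := H ⟨n₁ - 1, by omega⟩ ⟨n₁, by omega⟩ ⟨n₁ + 1, by omega⟩
    (by show n₁ - 1 = n₁ + 1 - 2; omega) (by show n₁ = n₁ + 1 - 1; omega) rfl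
  obtain ⟨p, -⟩ := H' ⟨0, by omega⟩ ⟨1, by omega⟩ ⟨2, by omega⟩ rfl rfl rfl
  have q' := (glue_lt_high A hA hA' σ₁ σ₂ ⟨n₁ + 1, by omega⟩ ⟨n₁, by omega⟩
    ⟨1, by omega⟩ ⟨0, by omega⟩ (by simp) (by simp)).mp q
  exact absurd p (lt_asymm q')

lemma peakSet_glue (A : Finset (Fin (n₁ + n₂))) (hA : A.card = n₁) (hA' : Aᶜ.card = n₂)
    (σ₁ : Equiv.Perm (Fin n₁)) (σ₂ : Equiv.Perm (Fin n₂)) (S₁ S₂ : Finset ℕ)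
    (hS₁ : S₁ ⊆ Finset.Icc 1 (n₁ - 1)) (hS₂ : S₂ ⊆ Finset.Icc 2 (n₂ - 1))
    (h2S : 2 ∈ S₂) (hm : n₁ = 1 ∨ n₁ - 1 ∈ S₁) :
    peakSet (glue A hA hA' σ₁ σ₂) = S₁ ∪ S₂.image (· + n₁) ↔
      peakSet σ₁ = S₁ ∧ peakSet σ₂ = S₂ := by
  have hn₂ : 3 ≤ n₂ := by
    have := hS₂ h2S; simp only [Finset.mem_Icc] at this; omega
  constructor
  · intro h
    constructor
    · ext i
      rw [mem_peakSet]
      constructor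
      · intro hp
        obtain ⟨hi2, hi3⟩ := isPeak_bounds hp
        have hmem : i ∈ peakSet (glue A hA hA' σ₁ σ₂) := by
          rw [mem_peakSet, isPeak_glue_low A hA hA' σ₁ σ₂ hi2 hi3]
          exact hp
        rw [h, Finset.mem_union] at hmem
        rcases hmem with h' | h'
        · exact h'
        · simp only [Finset.mem_image] at h'
          obtain ⟨x, hx, hxe⟩ := h'
          have := hS₂ hx
          simp only [Finset.mem_Icc] at this
          omega
      · intro hi
        have hi' := hS₁ hi
        simp only [Finset.mem_Icc] at hi'
        have hmem : i ∈ peakSet (glue A hA hA' σ₁ σ₂) := by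
          rw [h, Finset.mem_union]; exact Or.inl hi
        rw [mem_peakSet] at hmem
        have hi2 := (isPeak_bounds hmem).1
        exact (isPeak_glue_low A hA hA' σ₁ σ₂ hi2 (by omega)).mp hmem
    · ext i
      rw [mem_peakSet]
      constructor
      · intro hp
        obtain ⟨hi2, hi3⟩ := isPeak_bounds hp
        have hmem : n₁ + i ∈ peakSet (glue A hA hA' σ₁ σ₂) := by
          rw [mem_peakSet, isPeak_glue_high A hA hA' σ₁ σ₂ hi2 hi3]
          exact hp
        rw [h, Finset.mem_union] at hmem
        rcases hmem with h' | h'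
        · have := hS₁ h'
          simp only [Finset.mem_Icc] at this
          omega
        · simp only [Finset.mem_image] at h'
          obtain ⟨x, hx, hxe⟩ := h'
          have hxi : x = i := by omega
          rwa [hxi] at hx
      · intro hi
        have hi' := hS₂ hi
        simp only [Finset.mem_Icc] at hi'
        have hmem : n₁ + i ∈ peakSet (glue A hA hA' σ₁ σ₂) := by
          rw [h, Finset.mem_union]
          exact Or.inr (Finset.mem_image.mpr ⟨i, hi, by omega⟩)
        rw [mem_peakSet] at hmem
        exact (isPeak_glue_high A hA hA' σ₁ σ₂ (by omega) (by omega)).mp hmem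
  · rintro ⟨hσ₁, hσ₂⟩
    ext i
    rw [mem_peakSet, Finset.mem_union, Finset.mem_image]
    have hmm : n₁ = 1 ∨ IsPeak σ₁ (n₁ - 1) := by
      rcases hm with h | h
      · exact Or.inl h
      · right; rw [← mem_peakSet σ₁, hσ₁]; exact h
    have h2p : IsPeak σ₂ 2 := by rw [← mem_peakSet σ₂, hσ₂]; exact h2S
    constructor
    · intro hp
      obtain ⟨hi2, hi3⟩ := isPeak_bounds hp
      rcases lt_trichotomy i n₁ with hlt | heq | hgt
      · left
        rw [← hσ₁, mem_peakSet]
        exact (isPeak_glue_low A hA hA' σ₁ σ₂ hi2 hlt).mp hp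
      · subst heq
        exact absurd hp (not_isPeak_glue_junction₁ A hA hA' σ₁ σ₂ hmm)
      · rcases eq_or_lt_of_le (Nat.succ_le_of_lt hgt) with heq1 | hgt1
        · rw [← heq1] at hp
          exact absurd hp (not_isPeak_glue_junction₂ A hA hA' σ₁ σ₂ h2p)
        · right
          refine ⟨i - n₁, ?_, by omega⟩
          rw [← mem_peakSet σ₂, hσ₂] at h2p
          rw [← hσ₂, mem_peakSet]
          have hieq : i = n₁ + (i - n₁) := by omega
          rw [hieq] at hp
          exact (isPeak_glue_high A hA hA' σ₁ σ₂ (by omega) (by omega)).mp hp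
    · intro hmem
      rcases hmem with hi | ⟨x, hx, hxe⟩
      · have hi1 := hS₁ hi
        simp only [Finset.mem_Icc] at hi1
        rw [← hσ₁, mem_peakSet] at hi
        obtain ⟨hi2, hi3⟩ := isPeak_bounds hi
        exact (isPeak_glue_low A hA hA' σ₁ σ₂ hi2 hi3).mpr hi
      · have hx1 := hS₂ hx
        simp only [Finset.mem_Icc] at hx1
        rw [← hσ₂, mem_peakSet] at hx
        obtain ⟨hx2, hx3⟩ := isPeak_bounds hx
        have hieq : i = n₁ + x := by omega
        rw [hieq]
        exact (isPeak_glue_high A hA hA' σ₁ σ₂ hx2 hx3).mpr hx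

lemma compl_card_eq (A : Finset (Fin (n₁ + n₂))) (hA : A.card = n₁) : Aᶜ.card = n₂ := by
  rw [Finset.card_compl, hA, Fintype.card_fin]
  omega

noncomputable def glueMap :
    ({A : Finset (Fin (n₁ + n₂)) // A.card = n₁} × Equiv.Perm (Fin n₁) × Equiv.Perm (Fin n₂))
      → Equiv.Perm (Fin (n₁ + n₂)) :=
  fun t => glue t.1.1 t.1.2 (compl_card_eq t.1.1 t.1.2) t.2.1 t.2.2

lemma glue_image (A : Finset (Fin (n₁ + n₂))) (hA : A.card = n₁) (hA' : Aᶜ.card = n₂)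
    (σ₁ : Equiv.Perm (Fin n₁)) (σ₂ : Equiv.Perm (Fin n₂)) :
    Finset.univ.image (fun i : Fin n₁ => glue A hA hA' σ₁ σ₂ (Fin.castAdd n₂ i)) = A := by
  ext x
  simp only [Finset.mem_image, Finset.mem_univ, true_and]
  constructor
  · rintro ⟨i, rfl⟩
    rw [glue_apply_lt A hA hA' σ₁ σ₂ _ i rfl]
    exact (A.orderIsoOfFin hA (σ₁ i)).2
  · intro hx
    refine ⟨σ₁.symm ((A.orderIsoOfFin hA).symm ⟨x, hx⟩), ?_⟩
    rw [glue_apply_lt A hA hA' σ₁ σ₂ _ (σ₁.symm ((A.orderIsoOfFin hA).symm ⟨x, hx⟩)) rfl]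
    simp

lemma glueMap_injective :
    Function.Injective
      (glueMap : ({A : Finset (Fin (n₁ + n₂)) // A.card = n₁} ×
        Equiv.Perm (Fin n₁) × Equiv.Perm (Fin n₂)) → Equiv.Perm (Fin (n₁ + n₂))) := by
  rintro ⟨⟨A, hA⟩, σ₁, σ₂⟩ ⟨⟨B, hB⟩, τ₁, τ₂⟩ h
  simp only [glueMap] at h
  have hAB : A = B := by
    rw [← glue_image A hA (compl_card_eq A hA) σ₁ σ₂,
      ← glue_image B hB (compl_card_eq B hB) τ₁ τ₂, h]
  subst hAB
  have h₁ : σ₁ = τ₁ := by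
    ext i
    have e1 := glue_apply_lt A hA (compl_card_eq A hA) σ₁ σ₂ (Fin.castAdd n₂ i) i rfl
    have e2 := glue_apply_lt A hB (compl_card_eq A hB) τ₁ τ₂ (Fin.castAdd n₂ i) i rfl
    rw [h] at e1
    have := e1.symm.trans e2
    have h3 : (A.orderIsoOfFin hA) (σ₁ i) = (A.orderIsoOfFin hA) (τ₁ i) := by
      apply Subtype.ext
      simpa using this
    simpa using congrArg Fin.val ((A.orderIsoOfFin hA).injective h3)
  have h₂ : σ₂ = τ₂ := by
    ext j
    have e1 := glue_apply_ge A hA (compl_card_eq A hA) σ₁ σ₂ (Fin.natAdd n₁ j) j rfl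
    have e2 := glue_apply_ge A hB (compl_card_eq A hB) τ₁ τ₂ (Fin.natAdd n₁ j) j rfl
    rw [h] at e1
    have := e1.symm.trans e2
    have h3 : (Aᶜ.orderIsoOfFin (compl_card_eq A hA)) (σ₂ j)
        = (Aᶜ.orderIsoOfFin (compl_card_eq A hA)) (τ₂ j) := by
      apply Subtype.ext
      simpa using this
    simpa using congrArg Fin.val ((Aᶜ.orderIsoOfFin (compl_card_eq A hA)).injective h3)
  simp [h₁, h₂]

lemma glueMap_surjective :
    Function.Surjective
      (glueMap : ({A : Finset (Fin (n₁ + n₂)) // A.card = n₁} ×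
        Equiv.Perm (Fin n₁) × Equiv.Perm (Fin n₂)) → Equiv.Perm (Fin (n₁ + n₂))) := by
  intro σ
  classical
  set A : Finset (Fin (n₁ + n₂)) :=
    Finset.univ.image (fun i : Fin n₁ => σ (Fin.castAdd n₂ i)) with hAdef
  have hinj1 : Function.Injective (fun i : Fin n₁ => σ (Fin.castAdd n₂ i)) :=
    fun a b hab => Fin.castAdd_injective _ _ (σ.injective hab)
  have hA : A.card = n₁ := by
    rw [hAdef, Finset.card_image_of_injective _ hinj1, Finset.card_univ, Fintype.card_fin]
  have hA' : Aᶜ.card = n₂ := compl_card_eq A hA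
  have memA : ∀ i : Fin n₁, σ (Fin.castAdd n₂ i) ∈ A := by
    intro i; rw [hAdef]; exact Finset.mem_image_of_mem _ (Finset.mem_univ i)
  have memA' : ∀ j : Fin n₂, σ (Fin.natAdd n₁ j) ∈ Aᶜ := by
    intro j
    rw [Finset.mem_compl, hAdef]
    simp only [Finset.mem_image, Finset.mem_univ, true_and]
    rintro ⟨i, hi⟩
    have := σ.injective hi
    have := congrArg Fin.val this
    simp [Fin.castAdd, Fin.natAdd] at this
    omega
  let φ₁ : Fin n₁ → ↥A := fun i => ⟨σ (Fin.castAdd n₂ i), memA i⟩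
  have hφ₁ : Function.Injective φ₁ := by
    intro a b hab
    have := congrArg Subtype.val hab
    exact Fin.castAdd_injective _ _ (σ.injective this)
  have hφ₁b : Function.Bijective φ₁ := by
    rw [Fintype.bijective_iff_injective_and_card]
    refine ⟨hφ₁, ?_⟩
    rw [Fintype.card_fin, Fintype.card_coe, hA]
  let φ₂ : Fin n₂ → ↥(Aᶜ) := fun j => ⟨σ (Fin.natAdd n₁ j), memA' j⟩
  have hφ₂ : Function.Injective φ₂ := by
    intro a b hab
    have := congrArg Subtype.val hab
    have h2 := congrArg Fin.val (σ.injective this)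
    simp only [Fin.coe_natAdd] at h2
    exact Fin.ext (by omega)
  have hφ₂b : Function.Bijective φ₂ := by
    rw [Fintype.bijective_iff_injective_and_card]
    refine ⟨hφ₂, ?_⟩
    rw [Fintype.card_fin, Fintype.card_coe, hA']
  let σ₁ : Equiv.Perm (Fin n₁) :=
    (Equiv.ofBijective φ₁ hφ₁b).trans (A.orderIsoOfFin hA).toEquiv.symm
  let σ₂ : Equiv.Perm (Fin n₂) :=
    (Equiv.ofBijective φ₂ hφ₂b).trans (Aᶜ.orderIsoOfFin hA').toEquiv.symm
  refine ⟨⟨⟨A, hA⟩, σ₁, σ₂⟩, ?_⟩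
  ext x
  rcases Nat.lt_or_ge (x : ℕ) n₁ with hx | hx
  · have key := glue_apply_lt A hA (compl_card_eq A hA) σ₁ σ₂ x ⟨x, hx⟩ rfl
    have : x = Fin.castAdd n₂ ⟨(x : ℕ), hx⟩ := Fin.ext rfl
    rw [glueMap]
    simp only
    rw [key]
    have : (A.orderIsoOfFin hA) (σ₁ ⟨(x : ℕ), hx⟩) = φ₁ ⟨(x : ℕ), hx⟩ := by
      simp [σ₁]
    rw [this]
    simp only [φ₁]
    congr 1
  · have hx2 : (x : ℕ) - n₁ < n₂ := by omega
    have key := glue_apply_ge A hA (compl_card_eq A hA) σ₁ σ₂ x ⟨(x : ℕ) - n₁, hx2⟩ (by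
      show (x : ℕ) = n₁ + ((x : ℕ) - n₁); omega)
    rw [glueMap]
    simp only
    rw [key]
    have : (Aᶜ.orderIsoOfFin hA') (σ₂ ⟨(x : ℕ) - n₁, hx2⟩) = φ₂ ⟨(x : ℕ) - n₁, hx2⟩ := by
      simp [σ₂]
    rw [this]
    exact congrArg Fin.val
      (congrArg σ (Fin.ext (show n₁ + ((x : ℕ) - n₁) = (x : ℕ) by omega)))

lemma numPeakSet_glue (S₁ S₂ : Finset ℕ)
    (hS₁ : S₁ ⊆ Finset.Icc 1 (n₁ - 1)) (hS₂ : S₂ ⊆ Finset.Icc 2 (n₂ - 1))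
    (h2S : 2 ∈ S₂) (hm : n₁ = 1 ∨ n₁ - 1 ∈ S₁) :
    numPeakSet (n₁ + n₂) (S₁ ∪ S₂.image (· + n₁)) =
      (n₁ + n₂).choose n₁ * numPeakSet n₁ S₁ * numPeakSet n₂ S₂ := by
  have hbij : Function.Bijective (glueMap (n₁ := n₁) (n₂ := n₂)) :=
    ⟨glueMap_injective, glueMap_surjective⟩
  let E := Equiv.ofBijective _ hbij
  have hiff : ∀ t : {A : Finset (Fin (n₁ + n₂)) // A.card = n₁} ×
      Equiv.Perm (Fin n₁) × Equiv.Perm (Fin n₂),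
      (peakSet t.2.1 = S₁ ∧ peakSet t.2.2 = S₂) ↔
        peakSet (E t) = S₁ ∪ S₂.image (· + n₁) := by
    intro t
    exact (peakSet_glue t.1.1 t.1.2 (compl_card_eq t.1.1 t.1.2) t.2.1 t.2.2 S₁ S₂
      hS₁ hS₂ h2S hm).symm
  let e1 : {t : {A : Finset (Fin (n₁ + n₂)) // A.card = n₁} ×
      Equiv.Perm (Fin n₁) × Equiv.Perm (Fin n₂) //
        peakSet t.2.1 = S₁ ∧ peakSet t.2.2 = S₂} ≃
      {σ : Equiv.Perm (Fin (n₁ + n₂)) // peakSet σ = S₁ ∪ S₂.image (· + n₁)} :=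
    Equiv.subtypeEquiv E hiff
  let e2 : ({A : Finset (Fin (n₁ + n₂)) // A.card = n₁} ×
      {σ : Equiv.Perm (Fin n₁) // peakSet σ = S₁} ×
      {σ : Equiv.Perm (Fin n₂) // peakSet σ = S₂}) ≃
      {t : {A : Finset (Fin (n₁ + n₂)) // A.card = n₁} ×
        Equiv.Perm (Fin n₁) × Equiv.Perm (Fin n₂) //
          peakSet t.2.1 = S₁ ∧ peakSet t.2.2 = S₂} :=
    { toFun := fun x => ⟨(x.1, x.2.1.1, x.2.2.1), x.2.1.2, x.2.2.2⟩
      invFun := fun t => (t.1.1, ⟨t.1.2.1, t.2.1⟩, ⟨t.1.2.2, t.2.2⟩)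
      left_inv := fun x => rfl
      right_inv := fun t => rfl }
  have := Nat.card_congr (e2.trans e1)
  rw [numPeakSet, ← this, Nat.card_prod, Nat.card_prod]
  rw [Nat.card_eq_fintype_card (α := {A : Finset (Fin (n₁ + n₂)) // A.card = n₁}),
    Fintype.card_finset_len, Fintype.card_fin]
  rw [numPeakSet, numPeakSet, mul_assoc]

lemma mem_compPeaks (c : List ℕ) (x : ℕ) :
    x ∈ compPeaks c ↔ ∃ i, i < c.length - 1 ∧ (c.take (i + 1)).sum = x := by
  unfold compPeaks
  simp only [Finset.mem_image, Finset.mem_range]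

lemma take_append_one_sum (u : List ℕ) (i : ℕ) (hi : i < u.length) :
    ((u ++ [1]).take (i + 1)).sum = (u.take (i + 1)).sum := by
  rw [List.take_append, List.sum_append]
  have h0 : i + 1 - u.length = 0 := by omega
  rw [h0]
  simp

lemma take_sum_pos (u : List ℕ) (hu : ∀ x ∈ u, 0 < x) (i : ℕ) (hi : i < u.length) :
    0 < (u.take (i + 1)).sum := by
  apply List.sum_pos
  · exact fun x hx => hu x (List.take_subset _ _ hx)
  · intro h
    have hlen := congrArg List.length h
    rw [List.length_take] at hlen
    simp only [List.length_nil] at hlen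
    omega

lemma take_sum_le (u : List ℕ) (i : ℕ) : (u.take i).sum ≤ u.sum := by
  have := List.sum_take_add_sum_drop u i
  omega

lemma take_sum_lt (v : List ℕ) (hv : ∀ x ∈ v, 0 < x) (i : ℕ) (hi : i < v.length) :
    (v.take i).sum < v.sum := by
  have h1 := List.sum_take_add_sum_drop v i
  have h2 : 0 < (v.drop i).sum := by
    apply List.sum_pos
    · exact fun x hx => hv x (List.drop_subset _ _ hx)
    · intro h
      have hlen := congrArg List.length h
      rw [List.length_drop] at hlen
      simp only [List.length_nil] at hlen
      omega
  omega

lemma compPeaks_append_one_subset (u : List ℕ) (hu : ∀ x ∈ u, 0 < x) :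
    compPeaks (u ++ [1]) ⊆ Finset.Icc 1 u.sum := by
  intro x hx
  rw [mem_compPeaks] at hx
  obtain ⟨i, hi, rfl⟩ := hx
  simp only [List.length_append, List.length_cons, List.length_nil] at hi
  have hi' : i < u.length := by omega
  rw [take_append_one_sum u i hi']
  rw [Finset.mem_Icc]
  exact ⟨take_sum_pos u hu i hi', take_sum_le u (i + 1)⟩

lemma compPeaks_two_cons_subset (v : List ℕ) (hv : ∀ x ∈ v, 0 < x) :
    compPeaks ([2] ++ v) ⊆ Finset.Icc 2 (v.sum + 1) := by
  intro x hx
  rw [mem_compPeaks] at hx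
  obtain ⟨i, hi, rfl⟩ := hx
  simp only [List.length_append, List.length_cons, List.length_nil] at hi
  have hi' : i < v.length := by omega
  have : (([2] ++ v).take (i + 1)).sum = 2 + (v.take i).sum := by
    simp [List.take_succ_cons]
  rw [this, Finset.mem_Icc]
  have := take_sum_lt v hv i hi'
  omega

lemma two_mem_compPeaks (v : List ℕ) (hvne : v ≠ []) : 2 ∈ compPeaks ([2] ++ v) := by
  rw [mem_compPeaks]
  refine ⟨0, ?_, ?_⟩
  · simp only [List.length_append, List.length_cons, List.length_nil]
    have : 0 < v.length := List.length_pos_iff.mpr hvne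
    omega
  · simp

lemma sum_mem_compPeaks (u : List ℕ) (hune : u ≠ []) : u.sum ∈ compPeaks (u ++ [1]) := by
  rw [mem_compPeaks]
  have hl : 0 < u.length := List.length_pos_iff.mpr hune
  refine ⟨u.length - 1, ?_, ?_⟩
  · simp only [List.length_append, List.length_cons, List.length_nil]
    omega
  · have h1 : u.length - 1 + 1 = u.length := by omega
    rw [take_append_one_sum u _ (by omega), h1, List.take_length]

lemma compPeaks_split (u v : List ℕ) (hvne : v ≠ []) :
    compPeaks (u ++ [3] ++ v) =
      compPeaks (u ++ [1]) ∪ (compPeaks ([2] ++ v)).image (· + (u.sum + 1)) := by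
  have hvl : 0 < v.length := List.length_pos_iff.mpr hvne
  have assoc : u ++ [3] ++ v = u ++ (3 :: v) := by simp
  ext x
  rw [mem_compPeaks, Finset.mem_union, mem_compPeaks, Finset.mem_image]
  simp only [List.length_append, List.length_cons, List.length_nil]
  constructor
  · rintro ⟨i, hi, rfl⟩
    rcases Nat.lt_or_ge i u.length with hlt | hge
    · left
      refine ⟨i, by omega, ?_⟩
      rw [take_append_one_sum u i hlt, assoc, List.take_append,
        show i + 1 - u.length = 0 by omega]
      simp
    · right
      refine ⟨2 + (v.take (i - u.length)).sum, ?_, ?_⟩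
      · rw [mem_compPeaks]
        refine ⟨i - u.length, by simp; omega, ?_⟩
        show (List.take (i - u.length + 1) (2 :: v)).sum = _
        rw [List.take_succ_cons]
        simp
      · rw [assoc, List.take_append,
          show i + 1 - u.length = (i - u.length) + 1 by omega,
          List.take_of_length_le (show u.length ≤ i + 1 by omega), List.take_succ_cons]
        simp
        omega
  · rintro (⟨i, hi, rfl⟩ | ⟨y, hy, rfl⟩)
    · have hlt : i < u.length := by omega
      refine ⟨i, by omega, ?_⟩
      rw [take_append_one_sum u i hlt, assoc, List.take_append,
        show i + 1 - u.length = 0 by omega]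
      simp
    · rw [mem_compPeaks] at hy
      obtain ⟨j, hj, rfl⟩ := hy
      simp only [List.length_append, List.length_cons, List.length_nil] at hj
      refine ⟨u.length + j, by omega, ?_⟩
      have htk : (List.take (j + 1) ([2] ++ v)).sum = 2 + (v.take j).sum := by
        show (List.take (j + 1) (2 :: v)).sum = _
        rw [List.take_succ_cons]
        simp
      rw [htk, assoc, List.take_append,
        show u.length + j + 1 - u.length = j + 1 by omega,
        List.take_of_length_le (show u.length ≤ u.length + j + 1 by omega), List.take_succ_cons]
      simp
      omega

theorem separation_lemma (u v : List ℕ) (hu : ∀ x ∈ u, 0 < x) (hv : ∀ x ∈ v, 0 < x)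
    (hvne : v ≠ []) :
    Pcomp (u ++ [3] ++ v) =
      Nat.choose (u.sum + v.sum + 3) (u.sum + 1) * Pcomp (u ++ [1]) * Pcomp ([2] ++ v) := by
  have hsum : (u ++ [3] ++ v).sum = (u.sum + 1) + (v.sum + 2) := by
    simp [List.sum_append]
    omega
  have hsum1 : (u ++ [1]).sum = u.sum + 1 := by simp
  have hsum2 : ([2] ++ v).sum = v.sum + 2 := by simp; omega
  rw [Pcomp, Pcomp, Pcomp, hsum, hsum1, hsum2, compPeaks_split u v hvne]
  have key := numPeakSet_glue (n₁ := u.sum + 1) (n₂ := v.sum + 2)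
    (compPeaks (u ++ [1])) (compPeaks ([2] ++ v))
    (by simpa using compPeaks_append_one_subset u hu)
    (by simpa using compPeaks_two_cons_subset v hv)
    (two_mem_compPeaks v hvne)
    (by
      rcases eq_or_ne u [] with rfl | hune
      · left; simp
      · right; simpa using sum_mem_compPeaks u hune)
  rw [key]
  congr 1
  congr 1
  congr 1
  omega
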